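/- Let μ be supported on the positive integers and μ' on the negative integers, with tails H(n) = μ(]n, ∞[) and H'(-n) = μ'(]-∞, -n[). Define ρ(n) = Σ_{k≥1} μ'(-k) μ([n+1, n+k]) for n ≥ 0. Then Σ_{n≥0} ρ(n) = Σ_{n≥0} H(n) H'(-n). -/

import Mathlib

private lemma tsum_ite_mem_nat (s : Finset ℕ) (c : ENNReal) :
    ∑' n : ℕ, (if n ∈ s then c else 0) = s.card * c := by
  rw [tsum_eq_sum (s := s) (fun b hb => by simp [hb])]
  rw [Finset.sum_ite_of_true (fun b hb => hb)]
  simp [mul_comm]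

private lemma count_eq (j k : ℕ) (c : ENNReal) :
    (∑' n : ℕ, if n ≤ j ∧ j ≤ n + k then c else 0)
      = ∑' n : ℕ, if n ≤ j ∧ n ≤ k then c else 0 := by
  have h1 : (∑' n : ℕ, if n ≤ j ∧ j ≤ n + k then c else 0)
      = ∑' n : ℕ, if n ∈ Finset.Icc (j - k) j then c else 0 := by
    refine tsum_congr fun n => ?_
    congr 1
    simp only [Finset.mem_Icc, eq_iff_iff]
    omega
  have h2 : (∑' n : ℕ, if n ≤ j ∧ n ≤ k then c else 0)
      = ∑' n : ℕ, if n ∈ Finset.Icc 0 (min j k) then c else 0 := by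
    refine tsum_congr fun n => ?_
    congr 1
    simp only [Finset.mem_Icc, eq_iff_iff]
    omega
  rw [h1, h2, tsum_ite_mem_nat, tsum_ite_mem_nat, Nat.card_Icc, Nat.card_Icc]
  congr 2
  omega

private lemma ite_mul_ite' (p q : Prop) [Decidable p] [Decidable q] (a b : ENNReal) :
    (if p then a else 0) * (if q then b else 0) = if p ∧ q then a * b else 0 := by
  by_cases hp : p <;> by_cases hq : q <;> simp [hp, hq]

/-- With `μ` supported on the positive integers and `μ'` on the negative integers,
tails `H(n) = μ(]n,∞[)`, `H'(-n) = μ'(]-∞,-n[)`, and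
`ρ(n) = ∑_{k≥1} μ'(-k) μ([n+1,n+k])` for `n ≥ 0`, one has
`∑_{n≥0} ρ(n) = ∑_{n≥0} H(n) H'(-n)` in `[0,∞]`. -/
theorem stmt_7 (μ μ' : ℤ → ENNReal)
    (hμmass : ∑' k : ℤ, μ k = 1) (hμ'mass : ∑' k : ℤ, μ' k = 1)
    (hμsupp : ∀ k : ℤ, k ≤ 0 → μ k = 0) (hμ'supp : ∀ k : ℤ, 0 ≤ k → μ' k = 0)
    (H H' : ℕ → ENNReal)
    (hH : ∀ n : ℕ, H n = ∑' j : ℤ, if (n : ℤ) < j then μ j else 0)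
    (hH' : ∀ n : ℕ, H' n = ∑' k : ℤ, if k < -(n : ℤ) then μ' k else 0)
    (ρ : ℕ → ENNReal)
    (hρ : ∀ n : ℕ, ρ n = ∑' k : ℕ,
      μ' (-(k : ℤ) - 1) * ∑ j ∈ Finset.Icc ((n : ℤ) + 1) ((n : ℤ) + (k : ℤ) + 1), μ j) :
    ∑' n : ℕ, ρ n = ∑' n : ℕ, H n * H' n := by
  -- H as a sum over ℕ
  have hHn : ∀ n : ℕ, H n = ∑' j : ℕ, if n ≤ j then μ ((j : ℤ) + 1) else 0 := by
    intro n
    rw [hH n]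
    have hinj : Function.Injective (fun j : ℕ => (j : ℤ) + 1) := fun a b h => by
      simpa using h
    rw [← hinj.tsum_eq (f := fun j : ℤ => if (n : ℤ) < j then μ j else 0)]
    · refine tsum_congr fun j => ?_
      show (if (n : ℤ) < (j : ℤ) + 1 then μ ((j : ℤ) + 1) else 0) = _
      congr 1
      simp only [eq_iff_iff]
      omega
    · intro j hj
      simp only [Function.mem_support, ne_eq] at hj
      have hpos : (n : ℤ) < j := by
        by_contra h; simp [h] at hj
      exact ⟨(j - 1).toNat, by show ((j - 1).toNat : ℤ) + 1 = j; omega⟩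
  -- H' as a sum over ℕ
  have hH'n : ∀ n : ℕ, H' n = ∑' k : ℕ, if n ≤ k then μ' (-(k : ℤ) - 1) else 0 := by
    intro n
    rw [hH' n]
    have hinj : Function.Injective (fun k : ℕ => -(k : ℤ) - 1) := fun a b h => by
      simp only at h; omega
    rw [← hinj.tsum_eq (f := fun k : ℤ => if k < -(n : ℤ) then μ' k else 0)]
    · refine tsum_congr fun k => ?_
      show (if -(k : ℤ) - 1 < -(n : ℤ) then μ' (-(k : ℤ) - 1) else 0) = _
      congr 1
      simp only [eq_iff_iff]
      omega
    · intro k hk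
      simp only [Function.mem_support, ne_eq] at hk
      have hneg : k < -(n : ℤ) := by
        by_contra h; simp [h] at hk
      exact ⟨(-k - 1).toNat, by show -((-k - 1).toNat : ℤ) - 1 = k; omega⟩
  -- Finset sum in ρ as a tsum over ℕ
  have hIcc : ∀ n k : ℕ,
      (∑ j ∈ Finset.Icc ((n : ℤ) + 1) ((n : ℤ) + (k : ℤ) + 1), μ j)
        = ∑' j : ℕ, if n ≤ j ∧ j ≤ n + k then μ ((j : ℤ) + 1) else 0 := by
    intro n k
    rw [tsum_eq_sum (s := Finset.Icc n (n + k)) (fun b hb => by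
      simp only [Finset.mem_Icc] at hb
      rw [if_neg]; omega)]
    have hmap : Finset.Icc ((n : ℤ) + 1) ((n : ℤ) + (k : ℤ) + 1)
        = Finset.map ⟨fun j : ℕ => (j : ℤ) + 1, fun a b h => by simpa using h⟩
            (Finset.Icc n (n + k)) := by
      ext j
      simp only [Finset.mem_Icc, Finset.mem_map, Function.Embedding.coeFn_mk]
      constructor
      · intro hj
        exact ⟨(j - 1).toNat, by omega, by show (((j - 1).toNat : ℕ) : ℤ) + 1 = j; omega⟩
      · rintro ⟨m, hm, rfl⟩
        show (n : ℤ) + 1 ≤ (m : ℤ) + 1 ∧ (m : ℤ) + 1 ≤ (n : ℤ) + (k : ℤ) + 1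
        omega
    rw [hmap, Finset.sum_map]
    refine Finset.sum_congr rfl fun j hj => ?_
    simp only [Finset.mem_Icc] at hj
    rw [if_pos hj]
    rfl
  -- LHS as a triple sum
  have hL : ∑' n : ℕ, ρ n
      = ∑' (k : ℕ) (j : ℕ) (n : ℕ),
          if n ≤ j ∧ j ≤ n + k then μ' (-(k : ℤ) - 1) * μ ((j : ℤ) + 1) else 0 := by
    have : ∑' n : ℕ, ρ n
        = ∑' (n : ℕ) (k : ℕ) (j : ℕ),
            if n ≤ j ∧ j ≤ n + k then μ' (-(k : ℤ) - 1) * μ ((j : ℤ) + 1) else 0 := by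
      refine tsum_congr fun n => ?_
      rw [hρ n]
      refine tsum_congr fun k => ?_
      rw [hIcc n k, ← ENNReal.tsum_mul_left]
      refine tsum_congr fun j => ?_
      rw [mul_ite, mul_zero]
    rw [this, ENNReal.tsum_comm]
    exact tsum_congr fun k => ENNReal.tsum_comm
  -- RHS as a triple sum
  have hR : ∑' n : ℕ, H n * H' n
      = ∑' (k : ℕ) (j : ℕ) (n : ℕ),
          if n ≤ j ∧ n ≤ k then μ' (-(k : ℤ) - 1) * μ ((j : ℤ) + 1) else 0 := by
    have : ∑' n : ℕ, H n * H' n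
        = ∑' (n : ℕ) (k : ℕ) (j : ℕ),
            if n ≤ j ∧ n ≤ k then μ' (-(k : ℤ) - 1) * μ ((j : ℤ) + 1) else 0 := by
      refine tsum_congr fun n => ?_
      rw [hHn n, hH'n n, mul_comm, ← ENNReal.tsum_mul_right]
      refine tsum_congr fun k => ?_
      rw [← ENNReal.tsum_mul_left]
      refine tsum_congr fun j => ?_
      by_cases h1 : n ≤ j <;> by_cases h2 : n ≤ k <;> simp [h1, h2, mul_comm]
    rw [this, ENNReal.tsum_comm]
    exact tsum_congr fun k => ENNReal.tsum_comm
  rw [hL, hR]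
  exact tsum_congr fun k => tsum_congr fun j => count_eq j k _
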